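/- Fix loss parameters l01, l11 ∈ ℝ with 0 ≤ l11 < l01, set c = l01 − l11 and l_max = max(1, c), let x_max > 0, and let ε satisfy 0 < ε < min(1, c). Then for all θ, θ' ∈ ℝ^d with ‖θ − θ'‖₁ ≤ ε/(l_max·x_max) and every x ∈ ℝ^d with ‖x‖_∞ ≤ x_max, the distortion rate satisfies d(θ, θ'; x) ≤ ε. -/

import Mathlib

/-- The logistic (sigmoid) function `σ(z) = 1/(1+e^{-z})`. -/
noncomputable def logistic (z : ℝ) : ℝ := 1 / (1 + Real.exp (-z))

/-- Expected loss of label `a ∈ {0,1}` under parameter `θ` and context `x`: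
`μ(0,θ;x) = l01·σ(xᵀθ)` and `μ(1,θ;x) = 1 + (l11−1)·σ(xᵀθ)`. -/
noncomputable def expLoss {d : ℕ} (l01 l11 : ℝ) (a : Fin 2) (θ x : Fin d → ℝ) : ℝ :=
  if a = 0 then l01 * logistic (∑ i, x i * θ i)
  else 1 + (l11 - 1) * logistic (∑ i, x i * θ i)

/-- The optimal action: `1` if `μ(1,θ;x) ≤ μ(0,θ;x)`, else `0`. -/
noncomputable def optAct {d : ℕ} (l01 l11 : ℝ) (θ x : Fin d → ℝ) : Fin 2 :=
  if expLoss l01 l11 1 θ x ≤ expLoss l01 l11 0 θ x then 1 else 0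

/-- The distortion rate `d(θ,θ';x) = μ(α(θ;x),θ';x) − μ(α(θ';x),θ';x)`. -/
noncomputable def distRate {d : ℕ} (l01 l11 : ℝ) (θ θ' x : Fin d → ℝ) : ℝ :=
  expLoss l01 l11 (optAct l01 l11 θ x) θ' x - expLoss l01 l11 (optAct l01 l11 θ' x) θ' x

lemma logistic_hasDerivAt (z : ℝ) :
    HasDerivAt logistic (Real.exp (-z) / (1 + Real.exp (-z))^2) z := by
  have hpos : 0 < 1 + Real.exp (-z) := by positivity
  have h1 : HasDerivAt (fun z : ℝ => 1 + Real.exp (-z)) (-Real.exp (-z)) z := by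
    simpa using ((Real.hasDerivAt_exp (-z)).comp z ((hasDerivAt_id z).neg)).const_add 1
  have h2 := h1.inv (ne_of_gt hpos)
  have : logistic = fun z : ℝ => (1 + Real.exp (-z))⁻¹ := by
    funext t; simp [logistic, one_div]
  rw [this]
  rw [neg_neg] at h2
  exact h2

lemma logistic_lip (a b : ℝ) : |logistic a - logistic b| ≤ (1/4) * |a - b| := by
  have := Convex.norm_image_sub_le_of_norm_hasDerivWithin_le
    (f := logistic) (f' := fun z => Real.exp (-z) / (1 + Real.exp (-z))^2)
    (s := Set.univ) (C := 1/4)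
    (fun z _ => (logistic_hasDerivAt z).hasDerivWithinAt)
    (fun z _ => by
      have h : 0 < Real.exp (-z) := Real.exp_pos _
      rw [Real.norm_eq_abs, abs_of_nonneg (by positivity)]
      rw [div_le_iff₀ (by positivity)]
      nlinarith [sq_nonneg (1 - Real.exp (-z))])
    convex_univ (Set.mem_univ b) (Set.mem_univ a)
  simpa [Real.norm_eq_abs] using this


/-- If `‖θ − θ'‖₁ ≤ ε/(l_max·x_max)` with `l_max = max(1, l01 − l11)`, then for
every context with `‖x‖_∞ ≤ x_max` the distortion rate satisfies `d(θ,θ';x) ≤ ε`. -/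
theorem distRate_le_of_l1_close
    (d : ℕ) (l01 l11 : ℝ) (h11 : 0 ≤ l11) (hlt : l11 < l01)
    (xmax : ℝ) (hx : 0 < xmax)
    (ε : ℝ) (hε0 : 0 < ε) (hε1 : ε < min 1 (l01 - l11))
    (θ θ' x : Fin d → ℝ)
    (hθ : ∑ i, |θ i - θ' i| ≤ ε / (max 1 (l01 - l11) * xmax))
    (hxb : ∀ i, |x i| ≤ xmax) :
    distRate l01 l11 θ θ' x ≤ ε := by
  have hL1 : (1:ℝ) ≤ max 1 (l01 - l11) := le_max_left _ _
  have hLc : l01 - l11 ≤ max 1 (l01 - l11) := le_max_right _ _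
  have hL0 : (0:ℝ) < max 1 (l01 - l11) := lt_of_lt_of_le one_pos hL1
  have hdiff : |(∑ i, x i * θ i) - ∑ i, x i * θ' i| ≤ ε / max 1 (l01 - l11) := by
    have h1 : |(∑ i, x i * θ i) - ∑ i, x i * θ' i| ≤ ∑ i, |x i| * |θ i - θ' i| := by
      rw [← Finset.sum_sub_distrib]
      refine (Finset.abs_sum_le_sum_abs _ _).trans ?_
      apply Finset.sum_le_sum
      intro i _
      rw [← abs_mul, mul_sub]
    have h2 : ∑ i, |x i| * |θ i - θ' i| ≤ xmax * ∑ i, |θ i - θ' i| := by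
      rw [Finset.mul_sum]
      exact Finset.sum_le_sum fun i _ =>
        mul_le_mul_of_nonneg_right (hxb i) (abs_nonneg _)
    have h3 : xmax * ∑ i, |θ i - θ' i| ≤ xmax * (ε / (max 1 (l01 - l11) * xmax)) :=
      mul_le_mul_of_nonneg_left hθ hx.le
    have h4 : xmax * (ε / (max 1 (l01 - l11) * xmax)) = ε / max 1 (l01 - l11) := by
      field_simp
    linarith
  have hsb : |logistic (∑ i, x i * θ i) - logistic (∑ i, x i * θ' i)| ≤
      ε / (4 * max 1 (l01 - l11)) := by
    calc |logistic (∑ i, x i * θ i) - logistic (∑ i, x i * θ' i)|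
        ≤ (1/4) * |(∑ i, x i * θ i) - ∑ i, x i * θ' i| := logistic_lip _ _
    _ ≤ (1/4) * (ε / max 1 (l01 - l11)) := by linarith
    _ = ε / (4 * max 1 (l01 - l11)) := by ring
  have habs := abs_le.mp hsb
  have hq : (0:ℝ) ≤ ε / (4 * max 1 (l01 - l11)) := by positivity
  have hkey : (l01 - l11 + 1) * (ε / (4 * max 1 (l01 - l11))) ≤ ε := by
    calc (l01 - l11 + 1) * (ε / (4 * max 1 (l01 - l11)))
        ≤ 4 * max 1 (l01 - l11) * (ε / (4 * max 1 (l01 - l11))) :=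
          mul_le_mul_of_nonneg_right (by linarith) hq
    _ = ε := by field_simp
  have hc1 : (0:ℝ) ≤ l01 - l11 + 1 := by linarith
  have e0 : ∀ (τ : Fin d → ℝ), expLoss l01 l11 0 τ x = l01 * logistic (∑ i, x i * τ i) := by
    intro τ; simp [expLoss]
  have e1 : ∀ (τ : Fin d → ℝ),
      expLoss l01 l11 1 τ x = 1 + (l11 - 1) * logistic (∑ i, x i * τ i) := by
    intro τ; simp [expLoss]
  unfold distRate optAct
  simp only [e0, e1]
  split_ifs with ha hb hb
  · rw [sub_self]; linarith
  · simp only [e0, e1]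
    have key2 : (l01 - l11 + 1) * (logistic (∑ i, x i * θ i) - logistic (∑ i, x i * θ' i))
        ≤ (l01 - l11 + 1) * (ε / (4 * max 1 (l01 - l11))) :=
      mul_le_mul_of_nonneg_left (by linarith [habs.2]) hc1
    nlinarith [key2, hkey]
  · simp only [e0, e1]
    have key2 : (l01 - l11 + 1) * (logistic (∑ i, x i * θ' i) - logistic (∑ i, x i * θ i))
        ≤ (l01 - l11 + 1) * (ε / (4 * max 1 (l01 - l11))) :=
      mul_le_mul_of_nonneg_left (by linarith [habs.1]) hc1
    nlinarith [key2, hkey]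
  · rw [sub_self]; linarith
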